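/- arXiv:1810.10570 — 3 statements merged into one kernel-verified Lean document; each statement's English description precedes it below -/
import Mathlib

section
/- Let (R, m) be a Noetherian local ring, let I be an ideal of R of finite colength, and let f ∈ R be an element with r_f(I) < ∞. Then ℓ(R/I) ≤ r_f(I) · ℓ(R/(⟨f⟩ + I)); equivalently, the quotient ℓ(R/I) / ℓ(R/(⟨f⟩ + I)) is at most r_f(I). -/
/-- The length of an `R`-module `M`: the supremum of lengths of strictly increasing
chains of submodules of `M` (i.e. the Krull dimension of the submodule lattice),
viewed in `ℕ∞`. -/
noncomputable def moduleLength (R M : Type*) [Ring R] [AddCommGroup M] [Module R M] : ℕ∞ :=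
  WithBot.unbotD 0 (Order.krullDim (Submodule R M))

/-- The height of any submodule is at most the module length. -/
lemma height_le_moduleLength {R M : Type*} [Ring R] [AddCommGroup M] [Module R M]
    (N : Submodule R M) : Order.height N ≤ moduleLength R M := by
  haveI : Nonempty (Submodule R M) := ⟨N⟩
  rw [moduleLength, Order.krullDim_eq_iSup_height_of_nonempty, WithBot.unbotD_coe]
  exact le_iSup _ N

/-- A strict chain in a product order has length at most the sum of the heights of the
coordinates of its last element. -/
lemma ltSeries_pi_length_le {α : Type*} [Preorder α] {ι : Type*} [Fintype ι]
    (p : LTSeries (ι → α)) :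
    (p.length : ℕ∞) ≤ ∑ i : ι, Order.height (p.last i) := by
  classical
  obtain ⟨n, hn⟩ : ∃ n, p.length = n := ⟨_, rfl⟩
  rw [hn]
  induction n generalizing p with
  | zero => simp
  | succ n ih =>
    have hlen : p.eraseLast.length = n := by simp [hn]
    have hlt : p.eraseLast.last < p.last :=
      p.eraseLast_last_rel_last (by omega)
    rw [Pi.lt_def] at hlt
    obtain ⟨hle, i0, hi0⟩ := hlt
    have IH := ih p.eraseLast hlen
    have hstep : ∀ i, Order.height (p.eraseLast.last i) ≤ Order.height (p.last i) :=
      fun i => Order.height_mono (hle i)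
    have hkey : Order.height (p.eraseLast.last i0) + 1 ≤ Order.height (p.last i0) := by
      rw [Order.height_eq_iSup_lt_height (p.last i0)]
      exact le_iSup₂_of_le (p.eraseLast.last i0) hi0 le_rfl
    calc ((n + 1 : ℕ) : ℕ∞) = (n : ℕ∞) + 1 := by push_cast; ring
      _ ≤ (∑ i : ι, Order.height (p.eraseLast.last i)) + 1 := by
          exact add_le_add_left IH 1
      _ = (∑ i ∈ Finset.univ.erase i0, Order.height (p.eraseLast.last i)) +
            (Order.height (p.eraseLast.last i0) + 1) := by
          rw [← Finset.add_sum_erase _ _ (Finset.mem_univ i0)]; ring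
      _ ≤ (∑ i ∈ Finset.univ.erase i0, Order.height (p.last i)) +
            Order.height (p.last i0) := by
          refine add_le_add (Finset.sum_le_sum fun i _ => hstep i) hkey
      _ = ∑ i : ι, Order.height (p.last i) := by
          rw [← Finset.add_sum_erase _ _ (Finset.mem_univ i0)]; ring

/-- **Theorem (bound for the quotient of colengths).**
Let `(R, m)` be a Noetherian local ring, `I` an ideal of finite colength, and `f ∈ R` with
`r_f(I) < ∞` (i.e. `f ^ r ∈ I` for some `r ≥ 1`).  Then
`ℓ(R/I) ≤ r_f(I) · ℓ(R/(⟨f⟩ + I))`. -/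
theorem length_quotient_le_rootIndex_mul
    (R : Type*) [CommRing R] [IsNoetherianRing R] [IsLocalRing R]
    (I : Ideal R) (hI : moduleLength R (R ⧸ I) ≠ ⊤)
    (f : R) (hf : ∃ r : ℕ, 0 < r ∧ f ^ r ∈ I) :
    moduleLength R (R ⧸ I) ≤
      ((sInf {r : ℕ | 0 < r ∧ f ^ r ∈ I} : ℕ) : ℕ∞) *
        moduleLength R (R ⧸ (Ideal.span {f} + I)) := by
  classical
  set r : ℕ := sInf {r : ℕ | 0 < r ∧ f ^ r ∈ I} with hr
  have hrmem : 0 < r ∧ f ^ r ∈ I := Nat.sInf_mem hf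
  set K : Ideal R := Ideal.span {f} + I with hK
  -- the "colon by f^k" operation
  set C : Ideal R → ℕ → Ideal R :=
    fun J k => Submodule.comap (LinearMap.lsmul R R (f ^ k)) J with hC
  have memC : ∀ (J : Ideal R) (k : ℕ) (x : R), x ∈ C J k ↔ f ^ k * x ∈ J := by
    intro J k x
    simp [hC, Submodule.mem_comap, smul_eq_mul]
  -- the key map into an r-fold product
  set g : Submodule R (R ⧸ I) → (Fin r → Submodule R (R ⧸ K)) :=
    fun N k => Submodule.map K.mkQ (C (Submodule.comap I.mkQ N) k.val) with hg
  have hmono : Monotone g := by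
    intro N N' h k
    exact Submodule.map_mono (Submodule.comap_mono (Submodule.comap_mono h))
  -- key injectivity claim
  have key : ∀ J J' : Ideal R, I ≤ J → J ≤ J' →
      (∀ k : Fin r, Submodule.map K.mkQ (C J k.val) = Submodule.map K.mkQ (C J' k.val)) →
      J' ≤ J := by
    intro J J' hIJ hJJ' heq
    have main : ∀ j : ℕ, j ≤ r → C J' (r - j) ≤ C J (r - j) := by
      intro j
      induction j with
      | zero =>
        intro _
        intro a _
        rw [memC]
        simp only [Nat.sub_zero]
        exact J.mul_mem_right a (hIJ hrmem.2)
      | succ j ihj =>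
        intro hj
        have hk : r - (j + 1) < r := by omega
        have hk1 : r - (j + 1) + 1 = r - j := by omega
        set k := r - (j + 1) with hkdef
        intro a ha
        rw [memC] at ha
        -- from the hypothesis, C J' k ⊔ K = C J k ⊔ K
        have hsup : K ⊔ C J k = K ⊔ C J' k := by
          have h1 := congrArg (Submodule.comap K.mkQ) (heq ⟨k, hk⟩)
          rwa [Submodule.comap_map_mkQ, Submodule.comap_map_mkQ] at h1
        have haK : a ∈ K ⊔ C J k := by
          rw [hsup]
          exact Submodule.mem_sup_right ((memC J' k a).2 ha)
        rw [Submodule.mem_sup] at haK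
        obtain ⟨c, hc, b, hb, hab⟩ := haK
        rw [memC] at hb
        rw [hK, Submodule.add_eq_sup, Submodule.mem_sup] at hc
        obtain ⟨u, hu, i, hi, hui⟩ := hc
        rw [Ideal.mem_span_singleton] at hu
        obtain ⟨t, ht⟩ := hu
        -- a = f * t + i + b
        have habt : a = f * t + i + b := by rw [← hab, ← hui, ht]
        have hfki : f ^ k * i ∈ J := hIJ (I.mul_mem_left _ hi)
        -- f^(k+1) * t ∈ J'
        have ht' : f ^ (k + 1) * t ∈ J' := by
          have : f ^ (k + 1) * t = f ^ k * a - f ^ k * i - f ^ k * b := by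
            rw [habt]; ring
          rw [this]
          exact Ideal.sub_mem _ (Ideal.sub_mem _ ha (hJJ' hfki)) (hJJ' hb)
        -- hence by downward induction f^(k+1) * t ∈ J
        have ht2 : f ^ (k + 1) * t ∈ J := by
          have h2 := ihj (by omega)
          have h3 := h2 (show t ∈ C J' (r - j) by rw [memC, ← hk1]; exact ht')
          rw [memC, ← hk1] at h3
          exact h3
        -- conclude f^k * a ∈ J
        rw [memC]
        have : f ^ k * a = f ^ (k + 1) * t + f ^ k * i + f ^ k * b := by
          rw [habt]; ring
        rw [this]
        exact Ideal.add_mem _ (Ideal.add_mem _ ht2 hfki) hb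
    have h0 := main r le_rfl
    intro x hx
    have hx0 : x ∈ C J' (r - r) := by
      rw [memC, Nat.sub_self, pow_zero, one_mul]; exact hx
    have := h0 hx0
    rw [memC, Nat.sub_self, pow_zero, one_mul] at this
    exact this
  -- g is strictly monotone
  have hstrict : StrictMono g := by
    intro N N' hNN'
    refine lt_of_le_of_ne (hmono hNN'.le) ?_
    intro hEq
    have hcomaple : Submodule.comap I.mkQ N ≤ Submodule.comap I.mkQ N' :=
      Submodule.comap_mono hNN'.le
    have hIle : I ≤ Submodule.comap I.mkQ N := by
      intro x hx
      rw [Submodule.mem_comap]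
      have : I.mkQ x = 0 := by
        rw [Submodule.mkQ_apply, Submodule.Quotient.mk_eq_zero]
        exact hx
      rw [this]; exact N.zero_mem
    have hle' := key _ _ hIle hcomaple (fun k => congrFun hEq k)
    have hcomeq : Submodule.comap I.mkQ N = Submodule.comap I.mkQ N' :=
      le_antisymm hcomaple hle'
    have hinj : Function.Injective (Submodule.comap I.mkQ) :=
      Submodule.comap_injective_of_surjective (Submodule.Quotient.mk_surjective I)
    exact hNN'.ne (hinj hcomeq)
  -- conclude via chains
  haveI : Nonempty (Submodule R (R ⧸ I)) := ⟨⊥⟩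
  rw [moduleLength, Order.krullDim_eq_iSup_length, WithBot.unbotD_coe]
  refine iSup_le fun p => ?_
  have hq := ltSeries_pi_length_le (p.map g hstrict)
  simp only [RelSeries.map_length] at hq
  refine hq.trans ?_
  calc ∑ i : Fin r, Order.height ((p.map g hstrict).last i)
      ≤ ∑ _i : Fin r, moduleLength R (R ⧸ K) := by
        gcongr with i _hi
        exact height_le_moduleLength _
    _ = (r : ℕ∞) * moduleLength R (R ⧸ K) := by
        rw [Finset.sum_const, Finset.card_univ, Fintype.card_fin, nsmul_eq_mul]
end

section
/- Let R be a commutative ring, let I be an ideal of R, let f ∈ R, let φ_{f,I} : R/I → R/I be multiplication by f, and let i be a positive integer. Writing J_i = (⟨f^i⟩ + I)/I ⊆ R/I, the sequence 0 → ker(φ_{f,I}) ∩ J_i → J_i → J_i → (⟨f^i⟩ + I)/(⟨f^{i+1}⟩ + I) → 0 is exact, where the first map is the inclusion, the second is the restriction of φ_{f,I} (which maps J_i into J_i), and the third is the natural projection. -/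
/-- **The restricted exact sequence.**
Let `R` be a commutative ring, `I` an ideal of `R`, `f ∈ R`, let
`φ_{f,I} : R/I → R/I` be multiplication by `f`, and let `i ≥ 1`.  Writing
`J_i = (⟨f^i⟩ + I)/I ⊆ R/I` (the image in `R/I` of the ideal generated by `f^i`), the sequence
`0 → ker(φ_{f,I}) ∩ J_i → J_i → J_i → (⟨f^i⟩ + I)/(⟨f^{i+1}⟩ + I) → 0`
is exact, where the first map is the inclusion, the second is the restriction of `φ_{f,I}`
(which maps `J_i` into `J_i`), and the third is the natural projection (onto the image of
the ideal `⟨f^i⟩ + I` in `R/(⟨f^{i+1}⟩ + I)`). -/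
theorem exact_ker_inter_restricted
    (R : Type*) [CommRing R] (I : Ideal R) (f : R) (i : ℕ) (hi : 0 < i)
    (φ : (R ⧸ I) →ₗ[R] (R ⧸ I))
    (hφ : ∀ g : R, φ (Ideal.Quotient.mk I g) = Ideal.Quotient.mk I (f * g))
    (ι : (LinearMap.ker φ ⊓ Submodule.map I.mkQ (Ideal.span {f ^ i}) : Submodule R (R ⧸ I)) →ₗ[R]
        Submodule.map I.mkQ (Ideal.span {f ^ i}))
    (hι : ∀ x : (LinearMap.ker φ ⊓ Submodule.map I.mkQ (Ideal.span {f ^ i}) : Submodule R (R ⧸ I)),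
        (ι x : R ⧸ I) = (x : R ⧸ I))
    (φ' : Submodule.map I.mkQ (Ideal.span {f ^ i}) →ₗ[R] Submodule.map I.mkQ (Ideal.span {f ^ i}))
    (hφ' : ∀ x : Submodule.map I.mkQ (Ideal.span {f ^ i}), (φ' x : R ⧸ I) = φ (x : R ⧸ I))
    (π : Submodule.map I.mkQ (Ideal.span {f ^ i}) →ₗ[R]
        Submodule.map (Ideal.span {f ^ (i + 1)} + I).mkQ (Ideal.span {f ^ i} + I))
    (hπ : ∀ (g : R) (hg : Ideal.Quotient.mk I g ∈ Submodule.map I.mkQ (Ideal.span {f ^ i})),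
        (π ⟨Ideal.Quotient.mk I g, hg⟩ : R ⧸ (Ideal.span {f ^ (i + 1)} + I)) =
          Ideal.Quotient.mk (Ideal.span {f ^ (i + 1)} + I) g) :
    Function.Injective ι ∧ Function.Exact ι φ' ∧ Function.Exact φ' π ∧ Function.Surjective π := by

  constructor
  · intro x y hxy
    have h := congrArg Subtype.val hxy
    rw [hι x, hι y] at h
    exact Subtype.ext h
  constructor
  · intro y
    constructor
    · intro h
      have h1 : φ (y : R ⧸ I) = 0 := by
        rw [← hφ' y, h]; rfl
      refine ⟨⟨(y : R ⧸ I), ⟨h1, y.2⟩⟩, ?_⟩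
      exact Subtype.ext (hι _)
    · rintro ⟨z, rfl⟩
      apply Subtype.ext
      rw [hφ', hι]
      exact z.2.1
  constructor
  · intro x
    constructor
    · intro h
      obtain ⟨g, hg, hgx⟩ := x.2
      have hgx' : Ideal.Quotient.mk I g = (x : R ⧸ I) := hgx
      have hgmem : Ideal.Quotient.mk I g ∈
          Submodule.map I.mkQ (Ideal.span {f ^ i}) := hgx' ▸ x.2
      have hx : x = ⟨Ideal.Quotient.mk I g, hgmem⟩ := Subtype.ext hgx'.symm
      have h0 : Ideal.Quotient.mk (Ideal.span {f ^ (i + 1)} + I) g = 0 := by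
        rw [← hπ g hgmem, ← hx, h]; rfl
      have hgK : g ∈ Ideal.span {f ^ (i + 1)} + I :=
        Ideal.Quotient.eq_zero_iff_mem.mp h0
      obtain ⟨a, ha, b, hb, hab⟩ := Submodule.mem_sup.mp hgK
      obtain ⟨c, hc⟩ := Ideal.mem_span_singleton'.mp ha
      have hcmem : Ideal.Quotient.mk I (c * f ^ i) ∈
          Submodule.map I.mkQ (Ideal.span {f ^ i}) :=
        ⟨c * f ^ i, Ideal.mem_span_singleton'.mpr ⟨c, rfl⟩, rfl⟩
      refine ⟨⟨Ideal.Quotient.mk I (c * f ^ i), hcmem⟩, Subtype.ext ?_⟩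
      rw [hφ']
      show φ (Ideal.Quotient.mk I (c * f ^ i)) = (x : R ⧸ I)
      rw [hφ, ← hgx']
      have : f * (c * f ^ i) - g = -b := by
        rw [← hab, ← hc]; ring
      rw [Ideal.Quotient.mk_eq_mk_iff_sub_mem]
      rw [this]
      exact neg_mem hb
    · rintro ⟨y, rfl⟩
      obtain ⟨b, hb, hby⟩ := y.2
      have hby' : Ideal.Quotient.mk I b = (y : R ⧸ I) := hby
      have hx : (φ' y : R ⧸ I) = Ideal.Quotient.mk I (f * b) := by
        rw [hφ', ← hby', hφ]
      have hmem : Ideal.Quotient.mk I (f * b) ∈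
          Submodule.map I.mkQ (Ideal.span {f ^ i}) := hx ▸ (φ' y).2
      have : φ' y = ⟨Ideal.Quotient.mk I (f * b), hmem⟩ := Subtype.ext hx
      rw [this]
      apply Subtype.ext
      rw [hπ]
      show Ideal.Quotient.mk _ (f * b) = (0 : _ ⧸ _)
      refine Ideal.Quotient.eq_zero_iff_mem.mpr ?_
      obtain ⟨d, hd⟩ := Ideal.mem_span_singleton'.mp hb
      refine Submodule.mem_sup_left (Ideal.mem_span_singleton'.mpr ⟨d, ?_⟩)
      rw [← hd]; ring
  · intro w
    obtain ⟨a, haJ, haw⟩ := w.2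
    obtain ⟨s, hs, j, hj, hsj⟩ := Submodule.mem_sup.mp haJ
    have hsmem : Ideal.Quotient.mk I s ∈
        Submodule.map I.mkQ (Ideal.span {f ^ i}) := ⟨s, hs, rfl⟩
    refine ⟨⟨Ideal.Quotient.mk I s, hsmem⟩, Subtype.ext ?_⟩
    rw [hπ]
    show Ideal.Quotient.mk _ s = (w : R ⧸ (Ideal.span {f ^ (i + 1)} + I))
    have haw' : Ideal.Quotient.mk (Ideal.span {f ^ (i + 1)} + I) a
        = (w : R ⧸ (Ideal.span {f ^ (i + 1)} + I)) := haw
    rw [← haw']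
    rw [Ideal.Quotient.mk_eq_mk_iff_sub_mem]
    have : s - a = -j := by rw [← hsj]; ring
    rw [this]
    exact neg_mem (Submodule.mem_sup_right hj)
end

section
/- Let (R, m) be a Noetherian local ring, let I be an ideal of R of finite colength, let f ∈ R with r = r_f(I) < ∞, and let φ_{f,I} : R/I → R/I be multiplication by f. Then ℓ(R/I) = r · ℓ(R/(⟨f⟩ + I)) if and only if ker(φ_{f,I}) ⊆ (⟨f^i⟩ + I)/I for all i = 1, …, r−1. -/
open Order

section LengthBasics

variable {R M M' : Type*} [Ring R] [AddCommGroup M] [Module R M]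
  [AddCommGroup M'] [Module R M']

lemma krullDim_eq_length : krullDim (Submodule R M) = (moduleLength R M : WithBot ℕ∞) := by
  have h : krullDim (Submodule R M) ≠ ⊥ := by
    intro h
    have := krullDim_nonneg (α := Submodule R M)
    rw [h] at this
    simp at this
  unfold moduleLength
  cases hk : krullDim (Submodule R M) with
  | bot => exact absurd hk h
  | coe x => simp [hk]

lemma moduleLength_eq_height : moduleLength R M = height (⊤ : Submodule R M) := by
  have h1 : (height (⊤ : Submodule R M) : WithBot ℕ∞) ≤ krullDim (Submodule R M) :=
    height_le_krullDim _
  have h2 : krullDim (Submodule R M) ≤ (height (⊤ : Submodule R M) : WithBot ℕ∞) := by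
    rw [krullDim_eq_iSup_length]
    simp only [WithBot.coe_le_coe, iSup_le_iff]
    intro p
    exact length_le_height le_top
  rw [krullDim_eq_length] at h1 h2
  exact_mod_cast le_antisymm h2 h1

lemma moduleLength_eq_coheight : moduleLength R M = coheight (⊥ : Submodule R M) := by
  have h1 : (coheight (⊥ : Submodule R M) : WithBot ℕ∞) ≤ krullDim (Submodule R M) :=
    coheight_le_krullDim _
  have h2 : krullDim (Submodule R M) ≤ (coheight (⊥ : Submodule R M) : WithBot ℕ∞) := by
    rw [krullDim_eq_iSup_length]
    simp only [WithBot.coe_le_coe, iSup_le_iff]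
    intro p
    exact length_le_coheight bot_le
  rw [krullDim_eq_length] at h1 h2
  exact_mod_cast le_antisymm h2 h1

lemma moduleLength_congr (e : M ≃ₗ[R] M') : moduleLength R M = moduleLength R M' := by
  unfold moduleLength
  rw [krullDim_eq_of_orderIso (Submodule.orderIsoMapComap e)]

lemma moduleLength_eq_zero_of_subsingleton [Subsingleton M] : moduleLength R M = 0 := by
  rw [moduleLength_eq_height, height_eq_zero]
  intro N _
  exact (Subsingleton.elim (⊤:Submodule R M) N).le

lemma subsingleton_of_moduleLength_eq_zero (h : moduleLength R M = 0) : Subsingleton M := by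
  rw [moduleLength_eq_height, height_eq_zero] at h
  have h2 : (⊤ : Submodule R M) ≤ ⊥ := h bot_le
  refine subsingleton_of_forall_eq 0 fun y => ?_
  simpa using h2 (Submodule.mem_top (x := y))

end LengthBasics

section Additivity

variable {R M : Type*} [Ring R] [AddCommGroup M] [Module R M]

lemma enat_eq_top_of_forall_le {z : ℕ∞} (h : ∀ n : ℕ, (n : ℕ∞) ≤ z) : z = ⊤ := by
  cases z with
  | top => rfl
  | coe m =>
    have := h (m + 1)
    exact_mod_cast absurd (by exact_mod_cast this) (by omega : ¬ (m + 1 ≤ m))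

lemma moduleLength_eq_iSup :
    moduleLength R M = ⨆ p : LTSeries (Submodule R M), (p.length : ℕ∞) := by
  have h := krullDim_eq_iSup_length (α := Submodule R M)
  rw [krullDim_eq_length] at h
  exact_mod_cast h

lemma le_moduleLength_additive (N : Submodule R M) :
    moduleLength R N + moduleLength R (M ⧸ N) ≤ moduleLength R M := by
  have key : ∀ a b : ℕ, (a : ℕ∞) ≤ moduleLength R N → (b : ℕ∞) ≤ moduleLength R (M ⧸ N) →
      (a : ℕ∞) + b ≤ moduleLength R M := by
    intro a b ha hb
    rw [moduleLength_eq_height] at ha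
    rw [moduleLength_eq_coheight] at hb
    obtain ⟨p, hplast, hplen⟩ := exists_series_of_le_height _ ha
    obtain ⟨q, hqhead, hqlen⟩ := exists_series_of_le_coheight _ hb
    let f := Submodule.MapSubtype.orderEmbedding N
    let g := Submodule.comapMkQOrderEmbedding N
    let p' := p.map f f.strictMono
    let q' := q.map g g.strictMono
    have hconn : p'.last = q'.head := by
      show f p.last = g q.head
      rw [hplast, hqhead]
      show Submodule.map N.subtype ⊤ = Submodule.comap N.mkQ ⊥
      rw [Submodule.map_subtype_top, Submodule.comap_bot, Submodule.ker_mkQ]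
    have := Order.LTSeries.length_le_krullDim (RelSeries.smash p' q' hconn)
    rw [krullDim_eq_length] at this
    have hlen : (RelSeries.smash p' q' hconn).length = a + b := by
      show p'.length + q'.length = a + b
      show p.length + q.length = a + b
      rw [hplen, hqlen]
    rw [hlen] at this
    exact_mod_cast this
  cases hx : moduleLength R N with
  | top =>
    have : moduleLength R M = ⊤ := by
      apply enat_eq_top_of_forall_le
      intro n
      simpa using key n 0 (by simp [hx]) (by simp)
    simp [this]
  | coe x =>
    cases hy : moduleLength R (M ⧸ N) with
    | top =>
      have : moduleLength R M = ⊤ := by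
        apply enat_eq_top_of_forall_le
        intro n
        simpa using key 0 n (by simp) (by simp [hy])
      simp [this]
    | coe y =>
      exact_mod_cast key x y (by simp [hx]) (by simp [hy])

lemma moduleLength_additive_le (N : Submodule R M) :
    moduleLength R M ≤ moduleLength R N + moduleLength R (M ⧸ N) := by
  by_cases hN : moduleLength R N = ⊤
  · simp [hN]
  by_cases hQ : moduleLength R (M ⧸ N) = ⊤
  · simp [hQ]
  have bound : ∀ p : LTSeries (Submodule R M),
      (p.length : ℕ∞) ≤ moduleLength R N + moduleLength R (M ⧸ N) := by
    intro p
    set x : Submodule R M → Submodule R N := fun A => Submodule.comap N.subtype A with hxdef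
    set y : Submodule R M → Submodule R (M ⧸ N) := fun A => Submodule.map N.mkQ A with hydef
    have main : ∀ i : ℕ, ∀ h : i < p.length + 1,
        (i : ℕ∞) ≤ height (x (p ⟨i, h⟩)) + height (y (p ⟨i, h⟩)) := by
      intro i
      induction i with
      | zero => intro h; simp
      | succ i ih =>
        intro h
        have hi : i < p.length + 1 := Nat.lt_of_succ_lt h
        have hstep : p ⟨i, hi⟩ < p ⟨i + 1, h⟩ := p.strictMono (by simp [Fin.mk_lt_mk])
        have hxy : x (p ⟨i, hi⟩) < x (p ⟨i + 1, h⟩) ∨ y (p ⟨i, hi⟩) < y (p ⟨i + 1, h⟩) := by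
          by_contra hc
          push_neg at hc
          obtain ⟨h1, h2⟩ := hc
          have hx_eq : x (p ⟨i, hi⟩) = x (p ⟨i + 1, h⟩) :=
            ((Submodule.comap_mono hstep.le).lt_or_eq).resolve_left h1
          have hy_eq : y (p ⟨i, hi⟩) = y (p ⟨i + 1, h⟩) :=
            ((Submodule.map_mono hstep.le).lt_or_eq).resolve_left h2
          have hinf : p ⟨i, hi⟩ ⊓ N = p ⟨i + 1, h⟩ ⊓ N := by
            have := congrArg (Submodule.map N.subtype) hx_eq
            rwa [hxdef, Submodule.map_comap_subtype, Submodule.map_comap_subtype,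
              inf_comm N, inf_comm N] at this
          have hsup : p ⟨i, hi⟩ ⊔ N = p ⟨i + 1, h⟩ ⊔ N := by
            have := congrArg (Submodule.comap N.mkQ) hy_eq
            rwa [hydef, Submodule.comap_map_mkQ, Submodule.comap_map_mkQ,
              sup_comm N, sup_comm N] at this
          exact hstep.ne (eq_of_le_of_inf_le_of_sup_le hstep.le hinf.ge hsup.ge)
        have hxfin : height (x (p ⟨i, hi⟩)) < ⊤ := by
          refine lt_of_le_of_lt (height_mono le_top) ?_
          rw [← moduleLength_eq_height, lt_top_iff_ne_top]
          exact hN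
        have hyfin : height (y (p ⟨i, hi⟩)) < ⊤ := by
          refine lt_of_le_of_lt (height_mono le_top) ?_
          rw [← moduleLength_eq_height, lt_top_iff_ne_top]
          exact hQ
        have step2 : height (x (p ⟨i, hi⟩)) + height (y (p ⟨i, hi⟩)) + 1 ≤
            height (x (p ⟨i + 1, h⟩)) + height (y (p ⟨i + 1, h⟩)) := by
          rcases hxy with hlt | hlt
          · have h1 := Order.add_one_le_of_lt (height_strictMono hlt hxfin)
            have h2 : height (y (p ⟨i, hi⟩)) ≤ height (y (p ⟨i + 1, h⟩)) :=
              height_mono (Submodule.map_mono hstep.le)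
            calc height (x (p ⟨i, hi⟩)) + height (y (p ⟨i, hi⟩)) + 1
                = (height (x (p ⟨i, hi⟩)) + 1) + height (y (p ⟨i, hi⟩)) := by ring
              _ ≤ height (x (p ⟨i + 1, h⟩)) + height (y (p ⟨i + 1, h⟩)) :=
                  add_le_add h1 h2
          · have h1 := Order.add_one_le_of_lt (height_strictMono hlt hyfin)
            have h2 : height (x (p ⟨i, hi⟩)) ≤ height (x (p ⟨i + 1, h⟩)) :=
              height_mono (Submodule.comap_mono hstep.le)
            calc height (x (p ⟨i, hi⟩)) + height (y (p ⟨i, hi⟩)) + 1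
                = height (x (p ⟨i, hi⟩)) + (height (y (p ⟨i, hi⟩)) + 1) := by ring
              _ ≤ height (x (p ⟨i + 1, h⟩)) + height (y (p ⟨i + 1, h⟩)) :=
                  add_le_add h2 h1
        calc ((i + 1 : ℕ) : ℕ∞) = (i : ℕ∞) + 1 := by push_cast; ring
          _ ≤ height (x (p ⟨i, hi⟩)) + height (y (p ⟨i, hi⟩)) + 1 :=
              add_le_add (ih hi) le_rfl
          _ ≤ height (x (p ⟨i + 1, h⟩)) + height (y (p ⟨i + 1, h⟩)) := step2
    have := main p.length (by omega)
    refine le_trans this (add_le_add ?_ ?_)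
    · rw [moduleLength_eq_height]
      exact height_mono le_top
    · rw [moduleLength_eq_height]
      exact height_mono le_top
  rw [moduleLength_eq_iSup]
  exact iSup_le bound

end Additivity

lemma moduleLength_additive {R M : Type*} [Ring R] [AddCommGroup M] [Module R M]
    (N : Submodule R M) :
    moduleLength R M = moduleLength R N + moduleLength R (M ⧸ N) :=
  le_antisymm (moduleLength_additive_le N) (le_moduleLength_additive N)

section Ideals

variable {R : Type*} [CommRing R]

lemma length_quot_quot (I J : Ideal R) (h : I ≤ J) :
    moduleLength R (R ⧸ I) =
      moduleLength R (Submodule.map I.mkQ J) + moduleLength R (R ⧸ J) := by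
  rw [moduleLength_additive (Submodule.map I.mkQ J)]
  congr 1
  exact moduleLength_congr (Submodule.quotientQuotientEquivQuotient I J h)

lemma length_quot_le (I J : Ideal R) (h : I ≤ J) :
    moduleLength R (R ⧸ J) ≤ moduleLength R (R ⧸ I) := by
  rw [length_quot_quot I J h]
  exact le_add_self

lemma enat_self_eq_add_self {a m : ℕ∞} (ha : a ≠ ⊤) (h : a = m + a) : m = 0 := by
  lift a to ℕ using ha
  cases m with
  | top => simp [top_add] at h
  | coe m =>
    have : a = m + a := by exact_mod_cast h
    have : m = 0 := by omega
    exact_mod_cast this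

lemma length_quot_eq_iff (I J : Ideal R) (h : I ≤ J)
    (hfin : moduleLength R (R ⧸ I) ≠ ⊤) :
    moduleLength R (R ⧸ I) = moduleLength R (R ⧸ J) ↔ J = I := by
  constructor
  · intro he
    have h2 := length_quot_quot I J h
    rw [← he] at h2
    have hm : moduleLength R (Submodule.map I.mkQ J) = 0 := enat_self_eq_add_self hfin h2
    have := subsingleton_of_moduleLength_eq_zero hm
    have hbot : Submodule.map I.mkQ J = ⊥ := Submodule.eq_bot_of_subsingleton
    have hJI : J ≤ I := by
      rw [eq_bot_iff, Submodule.map_le_iff_le_comap, Submodule.comap_bot,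
        Submodule.ker_mkQ] at hbot
      exact hbot
    exact le_antisymm hJI h
  · intro he
    rw [he]

end Ideals

lemma enat_sum_eq_card_mul_iff {n : ℕ} {t : ℕ → ℕ∞} {c : ℕ∞} (hc : c ≠ ⊤)
    (hle : ∀ i < n, t i ≤ c) :
    (∑ i ∈ Finset.range n, t i) = (n : ℕ∞) * c ↔ ∀ i < n, t i = c := by
  induction n with
  | zero => simp
  | succ n ih =>
    have hle' : ∀ i < n, t i ≤ c := fun i hi => hle i (by omega)
    rw [Finset.sum_range_succ]
    constructor
    · intro h
      have hsum_le : ∑ i ∈ Finset.range n, t i ≤ (n : ℕ∞) * c := by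
        calc ∑ i ∈ Finset.range n, t i ≤ ∑ _i ∈ Finset.range n, c :=
              Finset.sum_le_sum fun i hi => hle' i (Finset.mem_range.mp hi)
          _ = (n : ℕ∞) * c := by rw [Finset.sum_const, Finset.card_range, nsmul_eq_mul]
      have htle : t n ≤ c := hle n (by omega)
      have hexp : ((n + 1 : ℕ) : ℕ∞) * c = (n : ℕ∞) * c + c := by push_cast; ring
      rw [hexp] at h
      have hnc : (n : ℕ∞) * c ≠ ⊤ := WithTop.mul_ne_top (by exact WithTop.natCast_ne_top n) hc
      have hs' : (∑ i ∈ Finset.range n, t i) ≠ ⊤ := by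
        intro hh; rw [hh] at hsum_le; exact hnc (top_le_iff.mp hsum_le)
      have ht' : t n ≠ ⊤ := by
        intro hh; rw [hh] at htle
        exact hc (top_le_iff.mp htle)
      lift c to ℕ using hc
      lift (∑ i ∈ Finset.range n, t i) to ℕ using hs' with S hS
      lift t n to ℕ using ht' with tn htn
      have h1 : S + tn = n * c + c := by exact_mod_cast h
      have h2 : S ≤ n * c := by exact_mod_cast hsum_le
      have h3 : tn ≤ c := by exact_mod_cast htle
      have hSeq : S = n * c := by omega
      have htneq : tn = c := by omega
      intro i hi
      rcases Nat.lt_succ_iff_lt_or_eq.mp hi with hi' | rfl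
      · exact (ih hle').mp (by exact_mod_cast hSeq) i hi'
      · rw [← htn]; exact_mod_cast htneq
    · intro h
      have h1 : ∑ i ∈ Finset.range n, t i = (n : ℕ∞) * c :=
        (ih hle').mpr fun i hi => h i (by omega)
      rw [h1, h n (by omega)]
      push_cast; ring


/-- Let `(R, m)` be a Noetherian local ring, `I` an ideal of finite colength, `f ∈ R` with
`r = r_f(I) < ∞`, and let `φ_{f,I} : R/I → R/I` be multiplication by `f`.  Then
`ℓ(R/I) = r · ℓ(R/(⟨f⟩ + I))` if and only if `ker(φ_{f,I}) ⊆ (⟨f^i⟩ + I)/I` for all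
`i = 1, …, r−1`, where `(⟨f^i⟩ + I)/I` is the image in `R/I` of the ideal generated by `f^i`. -/
theorem length_eq_mul_iff_ker_subset_all
    (R : Type*) [CommRing R] [IsNoetherianRing R] [IsLocalRing R]
    (I : Ideal R) (hI : moduleLength R (R ⧸ I) ≠ ⊤)
    (f : R) (hf : ∃ r : ℕ, 0 < r ∧ f ^ r ∈ I)
    (r : ℕ) (hr : r = sInf {r : ℕ | 0 < r ∧ f ^ r ∈ I})
    (φ : (R ⧸ I) →ₗ[R] (R ⧸ I))
    (hφ : ∀ g : R, φ (Ideal.Quotient.mk I g) = Ideal.Quotient.mk I (f * g)) :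
    moduleLength R (R ⧸ I) = (r : ℕ∞) * moduleLength R (R ⧸ (Ideal.span {f} + I)) ↔
      ∀ i : ℕ, 1 ≤ i → i ≤ r - 1 →
        LinearMap.ker φ ≤ Submodule.map I.mkQ (Ideal.span {f ^ i}) := by
  obtain ⟨hrpos, hfr⟩ : 0 < r ∧ f ^ r ∈ I := hr ▸ Nat.sInf_mem hf
  clear hr hf
  set J : ℕ → Ideal R := fun i => Ideal.span {f ^ i} + I with hJdef
  have hadd : ∀ i, J i = Ideal.span {f ^ i} ⊔ I := fun i => Submodule.add_eq_sup _ _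
  have hJanti : ∀ m n : ℕ, m ≤ n → J n ≤ J m := by
    intro m n hmn
    rw [hadd, hadd]
    refine sup_le_sup_right ?_ I
    rw [Ideal.span_le]
    intro x hx
    rw [Set.mem_singleton_iff.mp hx]
    exact Ideal.mem_span_singleton.mpr (pow_dvd_pow f hmn)
  have hJI : ∀ i, I ≤ J i := fun i => (hadd i) ▸ le_sup_right
  have hspanJ : ∀ i, Ideal.span {f ^ i} ≤ J i := fun i => (hadd i) ▸ le_sup_left
  have hJ0 : J 0 = ⊤ := by
    rw [hadd, pow_zero, Ideal.span_singleton_one, top_sup_eq]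
  have hJr : J r = I := by
    rw [hadd]
    exact sup_eq_right.mpr ((Ideal.span_singleton_le_iff_mem _).mpr hfr)
  set K : ℕ → Ideal R := fun i =>
    LinearMap.ker ((J (i + 1)).mkQ ∘ₗ LinearMap.toSpanSingleton R R (f ^ i)) with hKdef
  have hKmem : ∀ i g, g ∈ K i ↔ g * f ^ i ∈ J (i + 1) := by
    intro i g
    simp only [hKdef, LinearMap.mem_ker, LinearMap.comp_apply,
      LinearMap.toSpanSingleton_apply, Submodule.mkQ_apply,
      Submodule.Quotient.mk_eq_zero, smul_eq_mul]
  have hJ1K : ∀ i, J 1 ≤ K i := by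
    intro i g hg
    rw [hKmem]
    rw [hadd] at hg
    obtain ⟨a, ha, b, hb, rfl⟩ := Submodule.mem_sup.mp hg
    obtain ⟨c, hc⟩ := Ideal.mem_span_singleton.mp ha
    rw [hadd]
    have h1 : (a + b) * f ^ i = c * f ^ (i + 1) + b * f ^ i := by
      rw [hc]; ring
    rw [h1]
    exact Ideal.add_mem _
      (Submodule.mem_sup_left (Ideal.mem_span_singleton.mpr (dvd_mul_left _ _)))
      (Submodule.mem_sup_right (Ideal.mul_mem_right _ _ hb))
  have hstep : ∀ i, moduleLength R (R ⧸ J (i + 1)) =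
      moduleLength R (R ⧸ K i) + moduleLength R (R ⧸ J i) := by
    intro i
    rw [length_quot_quot (J (i + 1)) (J i) (hJanti i (i + 1) (by omega))]
    congr 1
    have e := LinearMap.quotKerEquivRange
      ((J (i + 1)).mkQ ∘ₗ LinearMap.toSpanSingleton R R (f ^ i))
    have hrange : LinearMap.range ((J (i + 1)).mkQ ∘ₗ LinearMap.toSpanSingleton R R (f ^ i))
        = Submodule.map (J (i + 1)).mkQ (J i) := by
      rw [LinearMap.range_comp, ← LinearMap.span_singleton_eq_range]
      rw [hadd i, Submodule.map_sup]
      have hIbot : Submodule.map (J (i + 1)).mkQ I = ⊥ := by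
        rw [eq_bot_iff, Submodule.map_le_iff_le_comap, Submodule.comap_bot, Submodule.ker_mkQ]
        exact hJI (i + 1)
      rw [hIbot, sup_bot_eq]
    rw [hrange] at e
    exact (moduleLength_congr e).symm
  have htel : ∀ n : ℕ, moduleLength R (R ⧸ J n) =
      ∑ i ∈ Finset.range n, moduleLength R (R ⧸ K i) := by
    intro n
    induction n with
    | zero =>
      have hsub : Subsingleton (R ⧸ J 0) := by
        rw [Submodule.Quotient.subsingleton_iff]
        exact hJ0
      rw [Finset.range_zero, Finset.sum_empty]
      exact moduleLength_eq_zero_of_subsingleton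
    | succ n ih =>
      rw [hstep n, ih, Finset.sum_range_succ, add_comm]
  have hfinJ1 : moduleLength R (R ⧸ J 1) ≠ ⊤ := by
    intro h
    apply hI
    have := length_quot_le I (J 1) (hJI 1)
    rw [h] at this
    exact top_le_iff.mp this
  have hc_le : ∀ i, moduleLength R (R ⧸ K i) ≤ moduleLength R (R ⧸ J 1) :=
    fun i => length_quot_le (J 1) (K i) (hJ1K i)
  have hspan1 : Ideal.span {f} + I = J 1 := by
    show Ideal.span {f} + I = Ideal.span {f ^ 1} + I
    rw [pow_one]
  have hRHS : ∀ i : ℕ,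
      (LinearMap.ker φ ≤ Submodule.map I.mkQ (Ideal.span {f ^ i})) ↔
      (∀ g : R, f * g ∈ I → g ∈ J i) := by
    intro i
    rw [← Submodule.comap_le_comap_iff_of_surjective I.mkQ_surjective,
      Submodule.comap_map_mkQ]
    have hJi : I ⊔ Ideal.span {f ^ i} = J i := by rw [hadd i, sup_comm]
    rw [hJi]
    have hmem : ∀ g : R, g ∈ Submodule.comap I.mkQ (LinearMap.ker φ) ↔ f * g ∈ I := by
      intro g
      simp only [Submodule.mem_comap, LinearMap.mem_ker]
      have hg0 : I.mkQ g = Ideal.Quotient.mk I g := rfl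
      rw [hg0, hφ g]
      exact Ideal.Quotient.eq_zero_iff_mem
    constructor
    · intro h g hg
      exact h ((hmem g).mpr hg)
    · intro h x hx
      exact h x ((hmem x).mp hx)
  have claim : (∀ i, 1 ≤ i → i ≤ r - 1 → ∀ g, f * g ∈ I → g ∈ J i) →
      ∀ j, j ≤ r - 1 → ∀ x, f ^ j * x ∈ I → x ∈ J (r - j) := by
    intro hcond j
    induction j with
    | zero =>
      intro _ x hx
      rw [Nat.sub_zero, hJr]
      simpa using hx
    | succ j ih =>
      intro hjr x hx
      have h1 : f ^ j * (f * x) ∈ I := by rw [← mul_assoc, ← pow_succ]; exact hx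
      have h2 : f * x ∈ J (r - j) := ih (by omega) _ h1
      rw [hadd] at h2
      obtain ⟨a, ha, b, hb, hab⟩ := Submodule.mem_sup.mp h2
      obtain ⟨c, hc⟩ := Ideal.mem_span_singleton.mp ha
      have hp : f * f ^ (r - j - 1) = f ^ (r - j) := by
        rw [← pow_succ']
        congr 1
        omega
      have hkey : f * (x - f ^ (r - j - 1) * c) ∈ I := by
        have heq : f * (x - f ^ (r - j - 1) * c) = b := by
          rw [mul_sub, ← mul_assoc, hp, ← hab, hc]
          ring
        rw [heq]; exact hb
      have hxJ : x - f ^ (r - j - 1) * c ∈ J (r - 1) :=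
        hcond (r - 1) (by omega) (by omega) _ hkey
      have hx2 : x = (x - f ^ (r - j - 1) * c) + f ^ (r - j - 1) * c := by ring
      rw [hx2]
      have hsub : r - (j + 1) = r - j - 1 := by omega
      rw [hsub]
      exact Ideal.add_mem _ (hJanti _ _ (by omega) hxJ)
        (hspanJ _ (Ideal.mem_span_singleton.mpr (dvd_mul_right _ _)))
  have lemA : (∀ i, 1 ≤ i → i ≤ r - 1 → ∀ g, f * g ∈ I → g ∈ J i) →
      ∀ i, i < r → K i ≤ J 1 := by
    intro hcond i hir g hg
    rw [hKmem] at hg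
    rw [hadd] at hg
    obtain ⟨a, ha, b, hb, hab⟩ := Submodule.mem_sup.mp hg
    obtain ⟨c, hc⟩ := Ideal.mem_span_singleton.mp ha
    have hkey : f ^ i * (g - f * c) ∈ I := by
      have heq : f ^ i * (g - f * c) = b := by
        rw [hc] at hab
        linear_combination -hab
      rw [heq]; exact hb
    have hclaim := claim hcond i (by omega) _ hkey
    have hJle : J (r - i) ≤ J 1 := hJanti 1 (r - i) (by omega)
    have h2 : g = (g - f * c) + f * c := by ring
    rw [h2]
    exact Ideal.add_mem _ (hJle hclaim)
      (hspanJ 1 (Ideal.mem_span_singleton.mpr (by rw [pow_one]; exact dvd_mul_right f c)))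
  have lemB : (∀ i, i < r → K i ≤ J 1) →
      ∀ i, 1 ≤ i → i ≤ r - 1 → ∀ g, f * g ∈ I → g ∈ J i := by
    intro hinj i
    induction i with
    | zero => omega
    | succ i ih =>
      intro _ hir g hg
      rcases Nat.eq_zero_or_pos i with rfl | hipos
      · exact hinj 1 (by omega) (by rw [hKmem, pow_one, mul_comm]; exact hJI 2 hg)
      · have hgJ : g ∈ J i := ih (by omega) (by omega) g hg
        rw [hadd] at hgJ
        obtain ⟨a, ha, b, hb, hab⟩ := Submodule.mem_sup.mp hgJ
        obtain ⟨c, hc⟩ := Ideal.mem_span_singleton.mp ha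
        have hcK : c ∈ K (i + 1) := by
          rw [hKmem]
          have heq : c * f ^ (i + 1) = f * g - f * b := by
            rw [← hab, hc]; ring
          rw [heq]
          exact hJI (i + 2) (Ideal.sub_mem _ hg (Ideal.mul_mem_left _ f hb))
        have hcJ1 : c ∈ J 1 := hinj (i + 1) (by omega) hcK
        rw [hadd] at hcJ1
        obtain ⟨a', ha', b', hb', hab'⟩ := Submodule.mem_sup.mp hcJ1
        obtain ⟨d, hd⟩ := Ideal.mem_span_singleton.mp ha'
        have hgeq : g = f ^ (i + 1) * d + (f ^ i * b' + b) := by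
          rw [← hab, hc, ← hab', hd]; ring
        rw [hgeq]
        exact Ideal.add_mem _
          (hspanJ (i + 1) (Ideal.mem_span_singleton.mpr (dvd_mul_right _ _)))
          (hJI (i + 1) (Ideal.add_mem _ (Ideal.mul_mem_left _ _ hb') hb))
  have hLHS : moduleLength R (R ⧸ I) = ∑ i ∈ Finset.range r, moduleLength R (R ⧸ K i) := by
    conv_lhs => rw [← hJr]
    exact htel r
  rw [hLHS, hspan1,
    enat_sum_eq_card_mul_iff hfinJ1 (fun i _ => hc_le i)]
  constructor
  · intro h i h1 h2
    rw [hRHS i]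
    exact lemB
      (fun j hj => ((length_quot_eq_iff (J 1) (K j) (hJ1K j) hfinJ1).mp (h j hj).symm).le)
      i h1 h2
  · intro h i hi
    have hcond : ∀ j, 1 ≤ j → j ≤ r - 1 → ∀ g, f * g ∈ I → g ∈ J j :=
      fun j h1 h2 => (hRHS j).mp (h j h1 h2)
    have hKeq : K i = J 1 := le_antisymm (lemA hcond i hi) (hJ1K i)
    exact ((length_quot_eq_iff (J 1) (K i) (hJ1K i) hfinJ1).mpr hKeq).symm
end
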